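/- Let d, N ∈ ℕ, let u, v : [N] → ℝ^d, and let M ∈ {0,1}^{N×N} be a boolean matrix such that for all i,j ∈ [N]: M(i,j) = 0 if and only if the Euclidean distance ‖u(i) − v(j)‖₂ equals 1. Then suprank(M) ≤ 3d + 1. (In particular, the complement of the bi-adjacency matrix of a bipartite unit-distance graph in dimension d has support-rank O(d).) -/

import Mathlib

open Matrix

/-- The support-rank of a boolean matrix: the minimum rank of a real matrix with
the same support. -/
noncomputable def suprank {I J : Type*} [Fintype J] (M : Matrix I J Bool) : ℕ :=
  sInf {r : ℕ | ∃ A : Matrix I J ℝ, A.rank = r ∧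
    ∀ i j, A i j = 0 ↔ M i j = false}

lemma suprank_le {I J : Type*} [Fintype J] (M : Matrix I J Bool) (A : Matrix I J ℝ)
    (hA : ∀ i j, A i j = 0 ↔ M i j = false) {r : ℕ} (hr : A.rank ≤ r) :
    suprank M ≤ r :=
  le_trans (Nat.sInf_le ⟨A, rfl, hA⟩) hr

theorem stmt8 (d N : ℕ) (u v : Fin N → EuclideanSpace ℝ (Fin d))
    (M : Matrix (Fin N) (Fin N) Bool)
    (h : ∀ i j, M i j = false ↔ ‖u i - v j‖ = 1) :
    suprank M ≤ 3 * d + 1 := by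
  have key : ∀ i j, (‖u i - v j‖ ^ 2 - 1 = 0) ↔ M i j = false := by
    intro i j
    rw [h i j]
    constructor
    · intro hz
      have h2 : ‖u i - v j‖ ^ 2 = 1 ^ 2 := by rw [one_pow]; linarith
      exact (sq_eq_sq₀ (norm_nonneg _) one_pos.le).mp h2
    · intro h1; rw [h1]; ring
  rcases Nat.eq_zero_or_pos d with hd | hd
  · subst hd
    set B : Matrix (Fin N) (Fin 1) ℝ := fun _ _ => -1 with hB
    set C : Matrix (Fin 1) (Fin N) ℝ := fun _ _ => 1 with hC
    refine suprank_le M (B * C) (fun i j => ?_) ?_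
    · have hBC : (B * C) i j = ‖u i - v j‖ ^ 2 - 1 := by
        have : u i - v j = 0 := Subsingleton.elim _ _
        rw [Matrix.mul_apply]; simp [hB, hC, this]
      rw [hBC]; exact key i j
    · calc (B * C).rank ≤ B.rank := Matrix.rank_mul_le_left B C
        _ ≤ Fintype.card (Fin 1) := Matrix.rank_le_card_width B
        _ ≤ 3 * 0 + 1 := by simp
  · set B : Matrix (Fin N) (Fin 2 ⊕ Fin d) ℝ := fun i x =>
      Sum.rec (fun k => if k = 0 then ‖u i‖ ^ 2 - 1 else 1) (fun k => -2 * u i k) x with hB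
    set C : Matrix (Fin 2 ⊕ Fin d) (Fin N) ℝ := fun x j =>
      Sum.rec (fun k => if k = 0 then 1 else ‖v j‖ ^ 2) (fun k => v j k) x with hC
    refine suprank_le M (B * C) (fun i j => ?_) ?_
    · have hBC : (B * C) i j = ‖u i - v j‖ ^ 2 - 1 := by
        have hinner : (inner ℝ (u i) (v j) : ℝ) = ∑ k, u i k * v j k := by
          rw [PiLp.inner_apply]
          simp [RCLike.inner_apply, conj_trivial]
          exact Finset.sum_congr rfl fun k _ => mul_comm _ _
        have hnorm : ‖u i - v j‖ ^ 2 = ‖u i‖ ^ 2 - 2 * (inner ℝ (u i) (v j) : ℝ) + ‖v j‖ ^ 2 :=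
          norm_sub_sq_real _ _
        rw [hnorm, hinner, Matrix.mul_apply]
        simp [Matrix.mul_apply, hB, hC, Fintype.sum_sum_type, Fin.sum_univ_two,
          Finset.mul_sum, Finset.sum_mul]
        ring_nf
      rw [hBC]; exact key i j
    · calc (B * C).rank ≤ B.rank := Matrix.rank_mul_le_left B C
        _ ≤ Fintype.card (Fin 2 ⊕ Fin d) := Matrix.rank_le_card_width B
        _ ≤ 3 * d + 1 := by simp; omega
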